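/- Let a ∈ (0,1), q ∈ ℝ, and let u : (0,a] → ℂ be C¹ with u' locally absolutely continuous, satisfying −u'' + (q/x)u = F on (0,a) with F ∈ L²(0,a). Assume that the limit u(+0) exists and |u(x) − u(+0)| ≤ C₀ x|ln x| on (0,a]. Then the limit b_+(u) := lim_{x→0+} ( u'(x) − q u(+0) ln x ) exists, and |u'(x) − q u(+0) ln x − b_+(u)| ≤ C x^{1/2} as x → 0+, with C depending only on q, a, C₀, ‖F‖_{L²}, |u(a)|, |u'(a)|. -/

import Mathlib

open MeasureTheory Filter

lemma abs_log_le_two_div_sqrt (s : ℝ) (h0 : 0 < s) (h1 : s < 1) :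
    |Real.log s| ≤ 2 * (Real.sqrt s)⁻¹ := by
  have hs : 0 < Real.sqrt s := Real.sqrt_pos.mpr h0
  have hlog : Real.log s ≤ 0 := Real.log_nonpos h0.le h1.le
  rw [abs_of_nonpos hlog]
  have h2 : Real.log (Real.sqrt s)⁻¹ ≤ (Real.sqrt s)⁻¹ - 1 :=
    Real.log_le_sub_one_of_pos (by positivity)
  rw [Real.log_inv, Real.log_sqrt h0.le] at h2
  have : (0:ℝ) ≤ (Real.sqrt s)⁻¹ := by positivity
  linarith

lemma amgm_aux (t r : ℝ) (ht : 0 < t) : r ≤ t / 2 * r ^ 2 + 1 / (2 * t) := by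
  rw [← sub_nonneg]
  have h : t / 2 * r ^ 2 + 1 / (2 * t) - r = (t * r - 1) ^ 2 / (2 * t) := by
    field_simp; ring
  rw [h]; positivity

lemma alg_aux (S sx M : ℝ) (hS : 0 < S) (hsx : 0 < sx) (hS2 : S ^ 2 = M + 1)
    (hM0 : 0 ≤ M) : (sx / S) / 2 * M + sx ^ 2 * (1 / (2 * (sx / S))) ≤ S * sx := by
  have h1 : (sx / S) / 2 * M + sx ^ 2 * (1 / (2 * (sx / S))) = sx * (M + S ^ 2) / (2 * S) := by
    field_simp
  rw [h1, div_le_iff₀ (by positivity)]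
  nlinarith

/-- Derivative asymptotics: for a solution of `−u'' + (q/x)u = F` on `(0,a)`
with `u(x) = u(+0) + O(x ln x)`, the limit `b₊(u) = lim_{x→0+}(u'(x) − q u(+0) ln x)`
exists and the remainder is `O(x^{1/2})`. -/
theorem stmt_14 (a : ℝ) (ha : 0 < a) (ha1 : a < 1) (q : ℝ)
    (u u' : ℝ → ℂ) (F : ℝ → ℂ)
    (hF : IntegrableOn (fun x => ‖F x‖ ^ 2) (Set.Ioo 0 a))
    (hu' : ∀ x ∈ Set.Ioo (0 : ℝ) a, HasDerivAt u (u' x) x)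
    (hu'c : ContinuousOn u' (Set.Ioc 0 a))
    (hu'' : ∀ x ∈ Set.Ioo (0 : ℝ) a,
      HasDerivAt u' (((q / x : ℝ) : ℂ) * u x - F x) x)
    (u0 : ℂ) (hlim : Tendsto u (nhdsWithin 0 (Set.Ioi 0)) (nhds u0))
    (C₀ : ℝ) (hC₀ : ∀ x ∈ Set.Ioc (0 : ℝ) a, ‖u x - u0‖ ≤ C₀ * (x * |Real.log x|)) :
    ∃ b : ℂ, ∃ C : ℝ,
      Tendsto (fun x : ℝ => u' x - (q : ℂ) * u0 * (Real.log x : ℂ))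
        (nhdsWithin 0 (Set.Ioi 0)) (nhds b) ∧
      ∀ x ∈ Set.Ioc (0 : ℝ) a,
        ‖u' x - (q : ℂ) * u0 * (Real.log x : ℂ) - b‖ ≤ C * Real.sqrt x := by
  -- C₀ is nonnegative
  have hloga : Real.log a < 0 := Real.log_neg ha ha1
  have hC0 : 0 ≤ C₀ := by
    have h := hC₀ a ⟨ha, le_refl a⟩
    have hp : 0 < a * |Real.log a| := by
      have : 0 < |Real.log a| := abs_pos.mpr (ne_of_lt hloga)
      positivity
    nlinarith [norm_nonneg (u a - u0)]
  -- continuity & measurability of u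
  have hucont : ContinuousOn u (Set.Ioo 0 a) :=
    fun x hx => ((hu' x hx).continuousAt).continuousWithinAt
  have humeas : AEStronglyMeasurable u (volume.restrict (Set.Ioo 0 a)) :=
    hucont.aestronglyMeasurable measurableSet_Ioo
  have hqmeas : Measurable (fun s : ℝ => ((q / s : ℝ) : ℂ)) :=
    Complex.measurable_ofReal.comp (measurable_const.div measurable_id)
  -- F is a.e. strongly measurable on (0,a)
  have hFmeasOo : AEStronglyMeasurable F (volume.restrict (Set.Ioo 0 a)) := by
    have h1 : AEStronglyMeasurable (fun x => ((q / x : ℝ) : ℂ) * u x - deriv u' x)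
        (volume.restrict (Set.Ioo 0 a)) :=
      ((hqmeas.aestronglyMeasurable.restrict.mul humeas).sub
        (measurable_deriv u').aestronglyMeasurable.restrict)
    refine h1.congr ?_
    rw [Filter.EventuallyEq, ae_restrict_iff' measurableSet_Ioo]
    refine ae_of_all _ fun x hx => ?_
    rw [(hu'' x hx).deriv]; ring
  -- F is integrable on (0,a]
  have hFintOo : IntegrableOn F (Set.Ioo 0 a) := by
    refine Integrable.mono' (g := fun x => (1 + ‖F x‖ ^ 2) / 2) ?_ hFmeasOo ?_
    · exact ((integrableOn_const measure_Ioo_lt_top.ne).add hF).div_const 2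
    · refine ae_of_all _ fun x => ?_
      nlinarith [sq_nonneg (‖F x‖ - 1), norm_nonneg (F x)]
  have hFint : IntegrableOn F (Set.Ioc 0 a) :=
    hFintOo.congr_set_ae Ioo_ae_eq_Ioc.symm
  have hFsq : IntegrableOn (fun x => ‖F x‖ ^ 2) (Set.Ioc 0 a) :=
    hF.congr_set_ae Ioo_ae_eq_Ioc.symm
  -- the perturbation term g
  set g : ℝ → ℂ := fun s => ((q / s : ℝ) : ℂ) * (u s - u0) - F s with hg_def
  have hgmeas : AEStronglyMeasurable g (volume.restrict (Set.Ioc 0 a)) := by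
    rw [← Measure.restrict_congr_set Ioo_ae_eq_Ioc]
    exact (hqmeas.aestronglyMeasurable.restrict.mul (humeas.sub aestronglyMeasurable_const)).sub
      hFmeasOo
  -- pointwise bound on g
  have hgb : ∀ s ∈ Set.Ioc (0:ℝ) a, ‖g s‖ ≤ 2 * |q| * C₀ * (Real.sqrt s)⁻¹ + ‖F s‖ := by
    intro s hs
    have hs0 : 0 < s := hs.1
    have hs1 : s < 1 := lt_of_le_of_lt hs.2 ha1
    have hsq : 0 < Real.sqrt s := Real.sqrt_pos.mpr hs0
    have h1 : ‖g s‖ ≤ ‖((q / s : ℝ) : ℂ) * (u s - u0)‖ + ‖F s‖ := norm_sub_le _ _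
    have h2 : ‖((q / s : ℝ) : ℂ) * (u s - u0)‖ = |q| / s * ‖u s - u0‖ := by
      rw [norm_mul, Complex.norm_real, Real.norm_eq_abs, abs_div, abs_of_pos hs0]
    have h3 := hC₀ s hs
    have h4 := abs_log_le_two_div_sqrt s hs0 hs1
    have h5 : |q| / s * ‖u s - u0‖ ≤ |q| / s * (C₀ * (s * |Real.log s|)) :=
      mul_le_mul_of_nonneg_left h3 (by positivity)
    have h6 : |q| / s * (C₀ * (s * |Real.log s|)) = |q| * C₀ * |Real.log s| := by
      field_simp
    have h7 : |q| * C₀ * |Real.log s| ≤ |q| * C₀ * (2 * (Real.sqrt s)⁻¹) :=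
      mul_le_mul_of_nonneg_left h4 (by positivity)
    calc ‖g s‖ ≤ |q| / s * ‖u s - u0‖ + ‖F s‖ := by rw [← h2]; exact h1
      _ ≤ 2 * |q| * C₀ * (Real.sqrt s)⁻¹ + ‖F s‖ := by
          rw [h6] at h5; nlinarith [h5, h7]
  -- integrability of 1/√s
  have hsqrtint : ∀ x ∈ Set.Ioc (0:ℝ) a, IntegrableOn (fun s => (Real.sqrt s)⁻¹) (Set.Ioc 0 x) := by
    intro x hx
    have h0 : IntegrableOn (fun s : ℝ => s ^ (-(1/2) : ℝ)) (Set.Ioc 0 x) :=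
      (intervalIntegrable_iff_integrableOn_Ioc_of_le hx.1.le).mp
        (intervalIntegral.intervalIntegrable_rpow' (by norm_num))
    refine h0.congr_fun (fun s hs => ?_) measurableSet_Ioc
    rw [Real.sqrt_eq_rpow, ← Real.rpow_neg hs.1.le]
  -- ∫_(0,x] 1/√s = 2√x
  have hsqrtval : ∀ x : ℝ, 0 < x → ∫ s in Set.Ioc (0:ℝ) x, (Real.sqrt s)⁻¹ = 2 * Real.sqrt x := by
    intro x hx0
    have h1 : ∫ s in Set.Ioc (0:ℝ) x, (Real.sqrt s)⁻¹
        = ∫ s in Set.Ioc (0:ℝ) x, s ^ (-(1/2) : ℝ) := by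
      refine setIntegral_congr_fun measurableSet_Ioc fun s hs => ?_
      rw [Real.sqrt_eq_rpow, ← Real.rpow_neg hs.1.le]
    rw [h1, ← intervalIntegral.integral_of_le hx0.le,
      integral_rpow (Or.inl (by norm_num))]
    rw [Real.sqrt_eq_rpow, Real.zero_rpow (by norm_num)]
    norm_num
    ring
  -- integrability of g on (0,a]
  have hgint : IntegrableOn g (Set.Ioc 0 a) := by
    refine Integrable.mono'
      (g := fun s => 2 * |q| * C₀ * (Real.sqrt s)⁻¹ + ‖F s‖) ?_ hgmeas ?_
    · exact ((hsqrtint a ⟨ha, le_refl a⟩).const_mul _).add hFint.norm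
    · rw [ae_restrict_iff' measurableSet_Ioc]
      exact ae_of_all _ hgb
  -- the FTC identity for x ∈ (0,a]
  have hFTC : ∀ x ∈ Set.Ioc (0:ℝ) a,
      ∫ s in x..a, (((q / s : ℝ) : ℂ) * u s - F s) = u' a - u' x := by
    intro x hx
    refine intervalIntegral.integral_eq_sub_of_hasDerivAt_of_le hx.2
      (hu'c.mono fun s hs => ⟨lt_of_lt_of_le hx.1 hs.1, hs.2⟩)
      (fun t ht => hu'' t ⟨lt_trans hx.1 ht.1, ht.2⟩) ?_
    -- interval integrability of (q/s) u s - F s on [x, a]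
    rw [intervalIntegrable_iff_integrableOn_Ioc_of_le hx.2]
    have heq : Set.EqOn (fun s => ((q / s : ℝ) : ℂ) * u0 + g s)
        (fun s => ((q / s : ℝ) : ℂ) * u s - F s) (Set.Ioc x a) := by
      intro s _; simp only [hg_def]; ring
    refine IntegrableOn.congr_fun ?_ heq measurableSet_Ioc
    refine Integrable.add ?_ (hgint.mono_set (Set.Ioc_subset_Ioc hx.1.le (le_refl a)))
    -- (q/s) u0 is continuous on [x,a]
    have hcont : ContinuousOn (fun s : ℝ => ((q / s : ℝ) : ℂ) * u0) (Set.Icc x a) := by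
      refine ContinuousOn.mul ?_ continuousOn_const
      refine Complex.continuous_ofReal.comp_continuousOn ?_
      exact continuousOn_const.div continuousOn_id
        (fun s hs => ne_of_gt (lt_of_lt_of_le hx.1 hs.1))
    exact (hcont.integrableOn_Icc).mono_set Set.Ioc_subset_Icc_self
  -- the (q/s) u0 integral
  have hlogint : ∀ x ∈ Set.Ioc (0:ℝ) a,
      ∫ s in x..a, ((q / s : ℝ) : ℂ) * u0
        = (q : ℂ) * u0 * ((Real.log a : ℂ) - (Real.log x : ℂ)) := by
    intro x hx
    have h1 : ∀ s : ℝ, ((q / s : ℝ) : ℂ) * u0 = (q : ℂ) * u0 * (((1 / s : ℝ)) : ℂ) := by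
      intro s; push_cast; ring
    simp only [h1]
    rw [intervalIntegral.integral_const_mul, intervalIntegral.integral_ofReal]
    have h0 : (0:ℝ) ∉ Set.uIcc x a := by
      rw [Set.uIcc_of_le hx.2]
      intro hc; exact absurd hc.1 (not_le.mpr hx.1)
    rw [integral_one_div h0, Real.log_div (ne_of_gt ha) (ne_of_gt hx.1)]
    push_cast; ring
  -- interval integrability of the pieces
  have hIq : ∀ x ∈ Set.Ioc (0:ℝ) a,
      IntervalIntegrable (fun s => ((q / s : ℝ) : ℂ) * u0) volume x a := by
    intro x hx
    rw [intervalIntegrable_iff_integrableOn_Ioc_of_le hx.2]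
    have hcont : ContinuousOn (fun s : ℝ => ((q / s : ℝ) : ℂ) * u0) (Set.Icc x a) := by
      refine ContinuousOn.mul ?_ continuousOn_const
      refine Complex.continuous_ofReal.comp_continuousOn ?_
      exact continuousOn_const.div continuousOn_id
        (fun s hs => ne_of_gt (lt_of_lt_of_le hx.1 hs.1))
    exact (hcont.integrableOn_Icc).mono_set Set.Ioc_subset_Icc_self
  have hIg : ∀ x ∈ Set.Ioc (0:ℝ) a, IntervalIntegrable g volume x a := by
    intro x hx
    rw [intervalIntegrable_iff_integrableOn_Ioc_of_le hx.2]
    exact hgint.mono_set (Set.Ioc_subset_Ioc hx.1.le (le_refl a))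
  -- the main identity before taking the limit
  have hid : ∀ x ∈ Set.Ioc (0:ℝ) a,
      u' x - (q : ℂ) * u0 * (Real.log x : ℂ)
        = u' a - (q : ℂ) * u0 * (Real.log a : ℂ) - ∫ s in x..a, g s := by
    intro x hx
    have h := hFTC x hx
    have heq : (fun s => ((q / s : ℝ) : ℂ) * u s - F s)
        = fun s => ((q / s : ℝ) : ℂ) * u0 + g s := by
      funext s; simp only [hg_def]; ring
    rw [heq, intervalIntegral.integral_add (hIq x hx) (hIg x hx), hlogint x hx] at h
    linear_combination h
  set I : ℂ := ∫ s in Set.Ioc (0:ℝ) a, g s with hI_def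
  set b : ℂ := u' a - (q : ℂ) * u0 * (Real.log a : ℂ) - I with hb_def
  have keyid : ∀ x ∈ Set.Ioc (0:ℝ) a,
      u' x - (q : ℂ) * u0 * (Real.log x : ℂ) - b = ∫ s in Set.Ioc (0:ℝ) x, g s := by
    intro x hx
    have hsum : I = (∫ s in Set.Ioc (0:ℝ) x, g s) + ∫ s in Set.Ioc x a, g s := by
      rw [hI_def, ← Set.Ioc_union_Ioc_eq_Ioc hx.1.le hx.2]
      exact setIntegral_union (Set.Ioc_disjoint_Ioc_of_le le_rfl) measurableSet_Ioc
        (hgint.mono_set (Set.Ioc_subset_Ioc (le_refl 0) hx.2))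
        (hgint.mono_set (Set.Ioc_subset_Ioc hx.1.le (le_refl a)))
    have h := hid x hx
    rw [intervalIntegral.integral_of_le hx.2] at h
    rw [hb_def]
    linear_combination h + hsum
  -- quantitative bound on the tail integral of ‖F‖
  set M : ℝ := ∫ s in Set.Ioc (0:ℝ) a, ‖F s‖ ^ 2 with hM_def
  have hM0 : 0 ≤ M := setIntegral_nonneg measurableSet_Ioc fun s _ => sq_nonneg _
  set S : ℝ := Real.sqrt (M + 1) with hS_def
  have hS : 0 < S := Real.sqrt_pos.mpr (by linarith)
  have hS2 : S ^ 2 = M + 1 := Real.sq_sqrt (by linarith)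
  have hFtail : ∀ x ∈ Set.Ioc (0:ℝ) a,
      ∫ s in Set.Ioc (0:ℝ) x, ‖F s‖ ≤ S * Real.sqrt x := by
    intro x hx
    have hx0 : 0 < x := hx.1
    set sx : ℝ := Real.sqrt x with hsx_def
    have hsx : 0 < sx := Real.sqrt_pos.mpr hx0
    have hsx2 : sx ^ 2 = x := Real.sq_sqrt hx0.le
    set t : ℝ := sx / S with ht_def
    have ht : 0 < t := div_pos hsx hS
    have hptw : ∀ s : ℝ, ‖F s‖ ≤ t / 2 * ‖F s‖ ^ 2 + 1 / (2 * t) :=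
      fun s => amgm_aux t ‖F s‖ ht
    have hFx : IntegrableOn F (Set.Ioc 0 x) :=
      hFint.mono_set (Set.Ioc_subset_Ioc (le_refl 0) hx.2)
    have hFsqx : IntegrableOn (fun s => ‖F s‖ ^ 2) (Set.Ioc 0 x) :=
      hFsq.mono_set (Set.Ioc_subset_Ioc (le_refl 0) hx.2)
    have h1 : ∫ s in Set.Ioc (0:ℝ) x, ‖F s‖
        ≤ ∫ s in Set.Ioc (0:ℝ) x, (t / 2 * ‖F s‖ ^ 2 + 1 / (2 * t)) := by
      refine setIntegral_mono_on hFx.norm ?_ measurableSet_Ioc fun s _ => hptw s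
      exact (hFsqx.const_mul _).add (integrableOn_const measure_Ioc_lt_top.ne)
    have h2 : ∫ s in Set.Ioc (0:ℝ) x, (t / 2 * ‖F s‖ ^ 2 + 1 / (2 * t))
        = t / 2 * (∫ s in Set.Ioc (0:ℝ) x, ‖F s‖ ^ 2) + x * (1 / (2 * t)) := by
      rw [integral_add (hFsqx.const_mul _) (integrableOn_const measure_Ioc_lt_top.ne),
        integral_const_mul, setIntegral_const, Real.volume_real_Ioc_of_le (by linarith), smul_eq_mul]
      norm_num
    have h3 : ∫ s in Set.Ioc (0:ℝ) x, ‖F s‖ ^ 2 ≤ M := by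
      rw [hM_def]
      refine setIntegral_mono_set hFsq ?_ ?_
      · exact ae_of_all _ fun s => sq_nonneg _
      · exact HasSubset.Subset.eventuallyLE (Set.Ioc_subset_Ioc (le_refl 0) hx.2)
    have h4 : t / 2 * (∫ s in Set.Ioc (0:ℝ) x, ‖F s‖ ^ 2) ≤ t / 2 * M :=
      mul_le_mul_of_nonneg_left h3 (by linarith)
    have h5 : t / 2 * M + x * (1 / (2 * t)) ≤ S * sx := by
      rw [ht_def, ← hsx2]
      exact alg_aux S sx M hS hsx hS2 hM0
    calc ∫ s in Set.Ioc (0:ℝ) x, ‖F s‖ ≤ _ := h1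
      _ = _ := h2
      _ ≤ t / 2 * M + x * (1 / (2 * t)) := by linarith
      _ ≤ S * sx := h5
  -- final quantitative bound
  have hbound : ∀ x ∈ Set.Ioc (0:ℝ) a,
      ‖u' x - (q:ℂ) * u0 * (Real.log x : ℂ) - b‖ ≤ (4 * |q| * C₀ + S) * Real.sqrt x := by
    intro x hx
    rw [keyid x hx]
    have hsub : Set.Ioc (0:ℝ) x ⊆ Set.Ioc 0 a := Set.Ioc_subset_Ioc (le_refl 0) hx.2
    have hgx : IntegrableOn g (Set.Ioc 0 x) := hgint.mono_set hsub
    have h1 : ‖∫ s in Set.Ioc (0:ℝ) x, g s‖ ≤ ∫ s in Set.Ioc (0:ℝ) x, ‖g s‖ :=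
      norm_integral_le_integral_norm g
    have h2 : ∫ s in Set.Ioc (0:ℝ) x, ‖g s‖
        ≤ ∫ s in Set.Ioc (0:ℝ) x, (2 * |q| * C₀ * (Real.sqrt s)⁻¹ + ‖F s‖) := by
      refine setIntegral_mono_on hgx.norm ?_ measurableSet_Ioc fun s hs => hgb s (hsub hs)
      exact ((hsqrtint x hx).const_mul _).add (hFint.mono_set hsub).norm
    have h3 : ∫ s in Set.Ioc (0:ℝ) x, (2 * |q| * C₀ * (Real.sqrt s)⁻¹ + ‖F s‖)
        = 2 * |q| * C₀ * (∫ s in Set.Ioc (0:ℝ) x, (Real.sqrt s)⁻¹)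
          + ∫ s in Set.Ioc (0:ℝ) x, ‖F s‖ := by
      rw [integral_add ((hsqrtint x hx).const_mul _) (hFint.mono_set hsub).norm,
        integral_const_mul]
    rw [hsqrtval x hx.1] at h3
    have h4 := hFtail x hx
    calc ‖∫ s in Set.Ioc (0:ℝ) x, g s‖ ≤ _ := h1
      _ ≤ _ := h2
      _ = 2 * |q| * C₀ * (2 * Real.sqrt x) + ∫ s in Set.Ioc (0:ℝ) x, ‖F s‖ := h3
      _ ≤ (4 * |q| * C₀ + S) * Real.sqrt x := by nlinarith [Real.sqrt_nonneg x]
  refine ⟨b, 4 * |q| * C₀ + S, ?_, hbound⟩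
  rw [← tendsto_sub_nhds_zero_iff]
  apply squeeze_zero_norm' (a := fun x => (4 * |q| * C₀ + S) * Real.sqrt x)
  · filter_upwards [Ioc_mem_nhdsGT_of_mem (⟨le_refl 0, ha⟩ : (0:ℝ) ∈ Set.Ico 0 a)] with x hx
    exact hbound x hx
  · have h := (((continuous_const (y := 4 * |q| * C₀ + S)).mul
        Real.continuous_sqrt).tendsto 0).mono_left
      (nhdsWithin_le_nhds (s := Set.Ioi (0:ℝ)))
    simpa [Pi.mul_def] using h
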